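/- Selecting the top-k candidates by noisy utility with i.i.d. Gumbel(2Δq/ε) noise added to each utility is equal in distribution to sequentially applying the exponential mechanism (with parameter ε each time, without replacement) k times; hence the top-k selection inherits the privacy of the k-fold sequential exponential mechanism. -/

import Mathlib

open MeasureTheory ProbabilityTheory Real

open Set Filter Topology

/-- The Gumbel distribution with scale `b`, with density `(1/b) exp(-(y/b + e^{-y/b}))`. -/
noncomputable def gumbelMeasure (b : ℝ) : Measure ℝ :=
  volume.withDensity fun y => ENNReal.ofReal ((1 / b) * exp (-(y / b + exp (-(y / b)))))

/-- The event that the ordered top-`k` candidates by noisy utility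
`y ↦ u y + G y ω` are exactly `σ 0, σ 1, …, σ (k-1)` (in decreasing order). -/
def topKEvent {Y Ω : Type*} {k : ℕ} (u : Y → ℝ) (G : Y → Ω → ℝ) (σ : Fin k → Y) :
    Set Ω :=
  {ω | (∀ i j : Fin k, i < j → u (σ j) + G (σ j) ω < u (σ i) + G (σ i) ω) ∧
       (∀ i : Fin k, ∀ y : Y, y ∉ Set.range σ → u y + G y ω < u (σ i) + G (σ i) ω)}

section auxGumbel

section core
variable {b A T : ℝ}

lemma core_hasDeriv (hb : 0 < b) (A : ℝ) (x : ℝ) :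
    HasDerivAt (fun x => -exp (-A * exp (x / b)))
      ((A / b) * exp (x / b) * exp (-A * exp (x / b))) x := by
  have h1 : HasDerivAt (fun x : ℝ => x / b) (1 / b) x := by
    simpa using (hasDerivAt_id x).div_const b
  have h2 : HasDerivAt (fun x : ℝ => exp (x / b)) (exp (x / b) * (1 / b)) x :=
    (Real.hasDerivAt_exp _).comp x h1
  have h3 : HasDerivAt (fun x : ℝ => -A * exp (x / b)) (-A * (exp (x / b) * (1 / b))) x :=
    h2.const_mul (-A)
  have h4 : HasDerivAt (fun x : ℝ => exp (-A * exp (x / b)))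
      (exp (-A * exp (x / b)) * (-A * (exp (x / b) * (1 / b)))) x :=
    (Real.hasDerivAt_exp _).comp x h3
  have := h4.neg
  exact this.congr_deriv (by ring)

lemma core_tendsto (hb : 0 < b) (hA : 0 < A) :
    Tendsto (fun x => -exp (-A * exp (x / b))) atTop (𝓝 0) := by
  have h1 : Tendsto (fun x : ℝ => x / b) atTop atTop :=
    tendsto_id.atTop_div_const hb
  have h2 : Tendsto (fun x : ℝ => exp (x / b)) atTop atTop :=
    Real.tendsto_exp_atTop.comp h1
  have h3 : Tendsto (fun x : ℝ => -A * exp (x / b)) atTop atBot := by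
    exact (tendsto_neg_atBot_iff.mpr (h2.const_mul_atTop hA)).congr (fun x => by ring)
  have h4 : Tendsto (fun x : ℝ => exp (-A * exp (x / b))) atTop (𝓝 0) :=
    Real.tendsto_exp_atBot.comp h3
  simpa using h4.neg

lemma core_integral (hb : 0 < b) (hA : 0 < A) (T : ℝ) :
    ∫ a in Iic T, (A / b) * exp (-a / b) * exp (-A * exp (-a / b))
      = exp (-A * exp (-T / b)) := by
  have h := integral_comp_neg_Iic T (fun x => (A / b) * exp (x / b) * exp (-A * exp (x / b)))
  have h2 : ∫ x in Ioi (-T), (A / b) * exp (x / b) * exp (-A * exp (x / b))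
      = 0 - (-exp (-A * exp (-T / b))) := by
    refine integral_Ioi_of_hasDerivAt_of_nonneg' (fun x _ => core_hasDeriv hb A x) ?_
      (core_tendsto hb hA)
    intro x _
    positivity
  calc ∫ a in Iic T, (A / b) * exp (-a / b) * exp (-A * exp (-a / b))
      = ∫ a in Iic T, (fun x => (A / b) * exp (x / b) * exp (-A * exp (x / b))) (-a) := by
        simp only [neg_div]
    _ = ∫ x in Ioi (-T), (A / b) * exp (x / b) * exp (-A * exp (x / b)) := h
    _ = exp (-A * exp (-T / b)) := by rw [h2]; ring_nf

lemma core_integrableOn (hb : 0 < b) (hA : 0 < A) (T : ℝ) :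
    IntegrableOn (fun a => (A / b) * exp (-a / b) * exp (-A * exp (-a / b))) (Iic T) := by
  have hI : IntegrableOn (fun x => (A / b) * exp (x / b) * exp (-A * exp (x / b))) (Ioi (-T)) :=
    integrableOn_Ioi_deriv_of_nonneg' (fun x _ => core_hasDeriv hb A x)
      (fun x _ => by positivity) (core_tendsto hb hA)
  have m : MeasurableEmbedding fun x : ℝ => -x :=
    (Homeomorph.neg ℝ).isClosedEmbedding.measurableEmbedding
  have key := m.integrableOn_map_iff
    (f := fun x => (A / b) * exp (x / b) * exp (-A * exp (x / b))) (μ := volume) (s := Ioi (-T))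
  rw [Measure.map_neg_eq_self (volume : Measure ℝ)] at key
  have hI2 : IntegrableOn ((fun x => (A / b) * exp (x / b) * exp (-A * exp (x / b))) ∘ (fun x : ℝ => -x))
      ((fun x : ℝ => -x) ⁻¹' Ioi (-T)) volume := key.mp hI
  have hset : (fun x : ℝ => -x) ⁻¹' Ioi (-T) = Iio T := by
    ext x; simp [neg_lt]
  rw [hset] at hI2
  have : IntegrableOn (fun a => (A / b) * exp (-a / b) * exp (-A * exp (-a / b))) (Iio T) := by
    refine hI2.congr_fun ?_ measurableSet_Iio
    intro a _; simp [Function.comp, neg_div]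
  exact this.congr_set_ae Iio_ae_eq_Iic.symm

end core

lemma gumbel_setLIntegral {b : ℝ} (hb : 0 < b) {c C : ℝ} (hc : 0 ≤ c) (hC : 0 ≤ C) (T : ℝ) :
    ∫⁻ a in Iio T, ENNReal.ofReal (c * exp (-C * exp (-a / b))) ∂(gumbelMeasure b)
      = ENNReal.ofReal (c * (1 / (1 + C)) * exp (-(1 + C) * exp (-T / b))) := by
  have hA : (0:ℝ) < 1 + C := by linarith
  have hmf : Measurable fun a : ℝ => ENNReal.ofReal (c * exp (-C * exp (-a / b))) := by
    apply ENNReal.measurable_ofReal.comp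
    fun_prop
  have hmd : Measurable fun y : ℝ => ENNReal.ofReal ((1 / b) * exp (-(y / b + exp (-(y / b))))) := by
    apply ENNReal.measurable_ofReal.comp
    fun_prop
  rw [gumbelMeasure, restrict_withDensity measurableSet_Iio,
    lintegral_withDensity_eq_lintegral_mul _ hmd hmf]
  have heq : ∀ a : ℝ,
      (ENNReal.ofReal ((1 / b) * exp (-(a / b + exp (-(a / b))))) *
        ENNReal.ofReal (c * exp (-C * exp (-a / b))))
      = ENNReal.ofReal ((c * (1 / (1 + C))) *
          ((1 + C) / b * exp (-a / b) * exp (-(1 + C) * exp (-a / b)))) := by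
    intro a
    rw [← ENNReal.ofReal_mul (by positivity)]
    congr 1
    have hbne : b ≠ 0 := hb.ne'
    have hAne : (1:ℝ) + C ≠ 0 := hA.ne'
    rw [neg_add, Real.exp_add, neg_div, neg_mul (1+C), add_mul, one_mul, neg_add, Real.exp_add]
    field_simp
  simp only [Pi.mul_apply, heq]
  rw [Measure.restrict_congr_set Iio_ae_eq_Iic]
  rw [← ofReal_integral_eq_lintegral_ofReal]
  · rw [integral_const_mul, core_integral hb hA T, mul_assoc]
  · exact ((core_integrableOn hb hA T).const_mul _)
  · filter_upwards with a
    positivity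

lemma gumbelMeasure_Iio {b : ℝ} (hb : 0 < b) (T : ℝ) :
    gumbelMeasure b (Iio T) = ENNReal.ofReal (exp (-exp (-T / b))) := by
  have := gumbel_setLIntegral hb (c := 1) (C := 0) zero_le_one le_rfl T
  simpa using this

lemma gumbel_tendsto_one {b : ℝ} (hb : 0 < b) :
    Tendsto (fun n : ℕ => ENNReal.ofReal (exp (-exp (-(n:ℝ) / b)))) atTop (𝓝 1) := by
  have h1 : Tendsto (fun n : ℕ => -(n:ℝ) / b) atTop atBot := by
    apply Tendsto.atBot_div_const hb
    exact tendsto_neg_atBot_iff.mpr tendsto_natCast_atTop_atTop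
  have h2 : Tendsto (fun n : ℕ => exp (-exp (-(n:ℝ) / b))) atTop (𝓝 1) := by
    have hn := (Real.tendsto_exp_atBot.comp h1).neg
    rw [neg_zero] at hn
    have := (Real.continuous_exp.tendsto 0).comp hn
    simpa [Real.exp_zero, Function.comp_def] using this
  have : Tendsto ENNReal.ofReal (𝓝 1) (𝓝 (ENNReal.ofReal 1)) :=
    (ENNReal.continuous_ofReal).tendsto 1
  simpa [Function.comp_def] using this.comp h2

lemma gumbel_probMeasure {b : ℝ} (hb : 0 < b) : IsProbabilityMeasure (gumbelMeasure b) := by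
  constructor
  have huniv : (univ : Set ℝ) = ⋃ n : ℕ, Iio (n : ℝ) := by
    ext x; simp only [mem_univ, mem_iUnion, mem_Iio, true_iff]
    exact exists_nat_gt x
  have hmono : Monotone fun n : ℕ => Iio ((n : ℝ)) := fun m n h => Iio_subset_Iio (by exact_mod_cast h)
  have ht := tendsto_measure_iUnion_atTop (μ := gumbelMeasure b) hmono
  rw [← huniv] at ht
  have ht2 : Tendsto (fun n : ℕ => gumbelMeasure b (Iio (n:ℝ))) atTop (𝓝 1) := by
    have := gumbel_tendsto_one hb
    apply this.congr
    intro n; rw [gumbelMeasure_Iio hb]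
  exact tendsto_nhds_unique ht ht2

section auxComb
variable {Y : Type*} [DecidableEq Y]

/-- capped sequential-order event -/
def capEv (u : Y → ℝ) : (m : ℕ) → Finset Y → (Fin m → Y) → ℝ → Set (Y → ℝ)
  | 0, S, _, t => {x | ∀ z ∈ S, u z + x z < t}
  | m + 1, S, τ, t =>
      {x | u (τ 0) + x (τ 0) < t ∧
        x ∈ capEv u m (S.erase (τ 0)) (fun i => τ i.succ) (u (τ 0) + x (τ 0))}

/-- Plackett–Luce product -/
noncomputable def plProd (w : Y → ℝ) : (m : ℕ) → Finset Y → (Fin m → Y) → ℝ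
  | 0, _, _ => 1
  | m + 1, S, τ => (w (τ 0) / ∑ z ∈ S, w z) * plProd w m (S.erase (τ 0)) (fun i => τ i.succ)

lemma succ_inj_aux {m : ℕ} {S : Finset Y} {τ : Fin (m+1) → Y} (hinj : Function.Injective τ)
    (hr : ∀ i, τ i ∈ S) : (Function.Injective fun i : Fin m => τ i.succ) ∧
      (∀ i : Fin m, τ i.succ ∈ S.erase (τ 0)) := by
  constructor
  · intro i j h
    exact Fin.succ_injective _ (hinj h)
  · intro i
    refine Finset.mem_erase.mpr ⟨fun h => Fin.succ_ne_zero i (hinj h), hr _⟩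

lemma plProd_nonneg {w : Y → ℝ} (hw : ∀ z, 0 ≤ w z) :
    ∀ (m : ℕ) (S : Finset Y) (τ : Fin m → Y), 0 ≤ plProd w m S τ := by
  intro m
  induction m with
  | zero => intro S τ; simp [plProd]
  | succ m ih =>
      intro S τ
      exact mul_nonneg (div_nonneg (hw _) (Finset.sum_nonneg fun z _ => hw z)) (ih _ _)

lemma capEv_congr {u : Y → ℝ} :
    ∀ (m : ℕ) (S : Finset Y) (τ : Fin m → Y), Function.Injective τ → (∀ i, τ i ∈ S) →
      ∀ (t : ℝ) (x x' : Y → ℝ),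
      (∀ z ∈ S, x z = x' z) → (x ∈ capEv u m S τ t ↔ x' ∈ capEv u m S τ t) := by
  intro m
  induction m with
  | zero =>
      intro S τ _ _ t x x' hxx
      simp only [capEv, Set.mem_setOf_eq]
      exact ⟨fun h z hz => (hxx z hz) ▸ h z hz, fun h z hz => (hxx z hz).symm ▸ h z hz⟩
  | succ m ih =>
      intro S τ hinj hr t x x' hxx
      obtain ⟨hinj', hr'⟩ := succ_inj_aux hinj hr
      simp only [capEv, Set.mem_setOf_eq]
      have h0 : x (τ 0) = x' (τ 0) := hxx _ (hr 0)
      have hrec := ih (S.erase (τ 0)) (fun i => τ i.succ) hinj' hr'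
        (u (τ 0) + x (τ 0)) x x' (fun z hz => hxx z (Finset.mem_of_mem_erase hz))
      rw [h0] at hrec ⊢
      rw [hrec]

lemma capEv_mono {u : Y → ℝ} (m : ℕ) (S : Finset Y) (τ : Fin m → Y) {t t' : ℝ} (h : t ≤ t') :
    capEv u m S τ t ⊆ capEv u m S τ t' := by
  cases m with
  | zero => intro x hx z hz; exact lt_of_lt_of_le (hx z hz) h
  | succ m => intro x hx; exact ⟨lt_of_lt_of_le hx.1 h, hx.2⟩

lemma measurableSet_capEv_pair (u : Y → ℝ) :
    ∀ (m : ℕ) (S : Finset Y) (τ : Fin m → Y),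
      MeasurableSet {p : ℝ × (Y → ℝ) | p.2 ∈ capEv u m S τ p.1} := by
  intro m
  induction m with
  | zero =>
      intro S τ
      have he : {p : ℝ × (Y → ℝ) | p.2 ∈ capEv u 0 S τ p.1}
          = ⋂ z ∈ S, {p : ℝ × (Y → ℝ) | u z + p.2 z < p.1} := by
        ext p; simp [capEv]
      rw [he]
      refine MeasurableSet.biInter S.countable_toSet fun z _ => ?_
      exact measurableSet_lt (by fun_prop)
        measurable_fst
  | succ m ih =>
      intro S τ
      have he : {p : ℝ × (Y → ℝ) | p.2 ∈ capEv u (m+1) S τ p.1}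
          = {p : ℝ × (Y → ℝ) | u (τ 0) + p.2 (τ 0) < p.1} ∩
            ((fun p : ℝ × (Y → ℝ) => (u (τ 0) + p.2 (τ 0), p.2)) ⁻¹'
              {p : ℝ × (Y → ℝ) | p.2 ∈ capEv u m (S.erase (τ 0)) (fun i => τ i.succ) p.1}) := by
        ext p; simp [capEv]
      rw [he]
      have hφ : Measurable fun p : ℝ × (Y → ℝ) => (u (τ 0) + p.2 (τ 0), p.2) :=
        by fun_prop
      refine MeasurableSet.inter ?_ (hφ (ih (S.erase (τ 0)) (fun i => τ i.succ)))
      exact measurableSet_lt (by fun_prop) measurable_fst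

lemma measurableSet_capEv (u : Y → ℝ) (m : ℕ) (S : Finset Y) (τ : Fin m → Y) (t : ℝ) :
    MeasurableSet (capEv u m S τ t) := by
  have h := measurableSet_capEv_pair u m S τ
  have : capEv u m S τ t = (fun x : Y → ℝ => (t, x)) ⁻¹'
      {p : ℝ × (Y → ℝ) | p.2 ∈ capEv u m S τ p.1} := rfl
  rw [this]
  exact (measurable_const.prodMk measurable_id) h

lemma mem_capEv_iff {u : Y → ℝ} :
    ∀ (m : ℕ) (S : Finset Y) (τ : Fin m → Y), Function.Injective τ → (∀ i, τ i ∈ S) →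
      ∀ (t : ℝ) (x : Y → ℝ),
      (x ∈ capEv u m S τ t ↔
        (∀ i, u (τ i) + x (τ i) < t) ∧
        (∀ i j, i < j → u (τ j) + x (τ j) < u (τ i) + x (τ i)) ∧
        (∀ z ∈ S, z ∉ Set.range τ → (∀ i, u z + x z < u (τ i) + x (τ i)) ∧ u z + x z < t)) := by
  intro m
  induction m with
  | zero =>
      intro S τ _ _ t x
      simp only [capEv, Set.mem_setOf_eq]
      constructor
      · intro h
        exact ⟨fun i => i.elim0, fun i => i.elim0, fun z hz _ => ⟨fun i => i.elim0, h z hz⟩⟩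
      · intro ⟨_, _, h3⟩ z hz
        exact (h3 z hz (by simp [Set.range_eq_empty])).2
  | succ m ih =>
      intro S τ hinj hr t x
      obtain ⟨hinj', hr'⟩ := succ_inj_aux hinj hr
      simp only [capEv, Set.mem_setOf_eq]
      rw [ih (S.erase (τ 0)) (fun i => τ i.succ) hinj' hr' (u (τ 0) + x (τ 0)) x]
      constructor
      · rintro ⟨h0, h1, h2, h3⟩
        have hval : ∀ i : Fin (m+1), u (τ i) + x (τ i) < t := by
          intro i
          refine Fin.cases ?_ ?_ i
          · exact h0
          · intro j; exact lt_trans (h1 j) h0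
        refine ⟨hval, ?_, ?_⟩
        · intro i j hij
          refine Fin.cases (motive := fun i => i < j → u (τ j) + x (τ j) < u (τ i) + x (τ i))
            ?_ ?_ i ?_
          · intro hj
            refine Fin.cases (motive := fun j => (0:Fin (m+1)) < j →
              u (τ j) + x (τ j) < u (τ 0) + x (τ 0)) ?_ ?_ j ?_
            · intro h; exact absurd h (lt_irrefl _)
            · intro j' _; exact h1 j'
            · exact hj
          · intro i' hi'j
            refine Fin.cases (motive := fun j => i'.succ < j →
              u (τ j) + x (τ j) < u (τ i'.succ) + x (τ i'.succ)) ?_ ?_ j ?_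
            · intro h; exact absurd h (Nat.not_lt_zero _).elim
            · intro j' hj'
              exact h2 i' j' (by exact Fin.succ_lt_succ_iff.mp hj')
            · exact hi'j
          · exact hij
        · intro z hz hzr
          have hz' : z ∈ S.erase (τ 0) := by
            refine Finset.mem_erase.mpr ⟨?_, hz⟩
            intro h; exact hzr ⟨0, h.symm⟩
          have hzr' : z ∉ Set.range fun i : Fin m => τ i.succ := by
            rintro ⟨i, hi⟩; exact hzr ⟨i.succ, hi⟩
          obtain ⟨ha, hb⟩ := h3 z hz' hzr'
          refine ⟨?_, lt_trans hb h0⟩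
          intro i
          refine Fin.cases ?_ ?_ i
          · exact hb
          · intro j; exact ha j
      · rintro ⟨h1, h2, h3⟩
        refine ⟨h1 0, fun j => h2 0 j.succ (Fin.succ_pos j), ?_, ?_⟩
        · intro i j hij
          exact h2 i.succ j.succ (Fin.succ_lt_succ_iff.mpr hij)
        · intro z hz hzr
          have hzS : z ∈ S := Finset.mem_of_mem_erase hz
          have hzr2 : z ∉ Set.range τ := by
            rintro ⟨i, hi⟩
            refine Fin.cases (motive := fun i => τ i = z → False) ?_ ?_ i hi
            · intro h; exact (Finset.mem_erase.mp hz).1 h.symm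
            · intro j h; exact hzr ⟨j, h⟩
          obtain ⟨ha, hb⟩ := h3 z hzS hzr2
          exact ⟨fun i => ha i.succ, ha 0⟩

lemma plProd_eq {w : Y → ℝ} :
    ∀ (m : ℕ) (S : Finset Y) (τ : Fin m → Y), Function.Injective τ → (∀ i, τ i ∈ S) →
      plProd w m S τ = ∏ i : Fin m, w (τ i) /
        ∑ z ∈ S.filter (fun z => ∀ j, j < i → τ j ≠ z), w z := by
  intro m
  induction m with
  | zero => intro S τ _ _; simp [plProd]
  | succ m ih =>
      intro S τ hinj hr
      obtain ⟨hinj', hr'⟩ := succ_inj_aux hinj hr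
      rw [plProd, ih (S.erase (τ 0)) (fun i => τ i.succ) hinj' hr', Fin.prod_univ_succ]
      congr 1
      · congr 1
        congr 1
        symm
        apply Finset.filter_true_of_mem
        intro z _ j hj
        exact absurd hj (by simp)
      · apply Finset.prod_congr rfl
        intro i _
        congr 1
        apply Finset.sum_congr ?_ (fun _ _ => rfl)
        ext z
        simp only [Finset.mem_filter, Finset.mem_erase]
        constructor
        · rintro ⟨⟨hz0, hzS⟩, hcond⟩
          refine ⟨hzS, ?_⟩
          intro j hj
          refine Fin.cases (motive := fun j => j < i.succ → τ j ≠ z) ?_ ?_ j hj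
          · intro _ h; exact hz0 h.symm
          · intro j' hj' h
            exact hcond j' (Fin.succ_lt_succ_iff.mp hj') h
        · rintro ⟨hzS, hcond⟩
          refine ⟨⟨?_, hzS⟩, ?_⟩
          · intro h; exact hcond 0 (Fin.succ_pos i) h.symm
          · intro j hj h
            exact hcond j.succ (Fin.succ_lt_succ_iff.mpr hj) h

end auxComb

section key
variable {Y : Type*} [Fintype Y] [DecidableEq Y] {Ω : Type*} [MeasurableSpace Ω]

theorem key_measure (P : Measure Ω) [IsProbabilityMeasure P] {b : ℝ} (hb : 0 < b)
    (G : Y → Ω → ℝ) (hmeas : ∀ y, Measurable (G y))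
    (hindep : iIndepFun G P)
    (hdist : ∀ y, Measure.map (G y) P = gumbelMeasure b) (u : Y → ℝ) :
    ∀ (m : ℕ) (S : Finset Y) (τ : Fin m → Y), Function.Injective τ → (∀ i, τ i ∈ S) →
      ∀ t : ℝ,
      P {ω | (fun z => G z ω) ∈ capEv u m S τ t}
        = ENNReal.ofReal (plProd (fun z => exp (u z / b)) m S τ *
            ∏ z ∈ S, exp (-(exp (u z / b)) * exp (-t / b))) := by
  intro m
  induction m with
  | zero =>
      intro S τ _ _ t
      have hev : {ω | (fun z => G z ω) ∈ capEv u 0 S τ t}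
          = ⋂ z ∈ (S : Finset Y), G z ⁻¹' Iio (t - u z) := by
        ext ω
        simp only [capEv, Set.mem_setOf_eq, Set.mem_iInter, Set.mem_preimage, mem_Iio]
        constructor
        · intro h z hz; linarith [h z hz]
        · intro h z hz; linarith [h z hz]
      rw [hev, (iIndepFun_iff_measure_inter_preimage_eq_mul.mp hindep) S
        (fun z hz => measurableSet_Iio)]
      have hone : ∀ z ∈ S, P (G z ⁻¹' Iio (t - u z))
          = ENNReal.ofReal (exp (-(exp (u z / b)) * exp (-t / b))) := by
        intro z _
        rw [← Measure.map_apply (hmeas z) measurableSet_Iio, hdist z, gumbelMeasure_Iio hb]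
        congr 1
        congr 1
        have harg : -(t - u z) / b = u z / b + -t / b := by ring
        rw [harg, Real.exp_add]
        ring
      rw [Finset.prod_congr rfl hone, plProd, one_mul,
        ← ENNReal.ofReal_prod_of_nonneg (fun z _ => (exp_pos _).le)]
  | succ m ih =>
      intro S τ hinj hr t
      obtain ⟨hinj', hr'⟩ := succ_inj_aux hinj hr
      set y := τ 0 with hy
      set S' := S.erase y with hS'
      set τ' : Fin m → Y := fun i => τ i.succ with hτ'
      set w : Y → ℝ := fun z => exp (u z / b) with hw
      set T : Finset Y := Finset.univ.erase y with hT
      have hyT : y ∉ T := by simp [hT]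
      have hzT : ∀ z : Y, z ≠ y → z ∈ T := by intro z hz; simp [hT, hz]
      set rest : Ω → ({ z // z ∈ T } → ℝ) := fun ω z => G z.1 ω with hrest
      have hrestm : Measurable rest := measurable_pi_lambda _ (fun z => hmeas z.1)
      -- extension map
      set ext : ℝ × ({ z // z ∈ T } → ℝ) → (Y → ℝ) :=
        fun p z => if h : z ∈ T then p.2 ⟨z, h⟩ else p.1 with hext
      have hextm : Measurable ext := by
        apply measurable_pi_lambda
        intro z
        by_cases h : z ∈ T
        · simp only [hext, dif_pos h]
          exact (measurable_pi_apply _).comp measurable_snd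
        · simp only [hext, dif_neg h]
          exact measurable_fst
      set C : Set (ℝ × ({ z // z ∈ T } → ℝ)) := ext ⁻¹' capEv u (m+1) S τ t with hC
      have hCm : MeasurableSet C := hextm (measurableSet_capEv u (m+1) S τ t)
      -- independence
      have hpairm : Measurable fun ω => (G y ω, rest ω) := (hmeas y).prodMk hrestm
      have hIndep : IndepFun (G y) rest P := by
        have h1 := hindep.indepFun_finset {y} T (by simp [hT]) hmeas
        have h2 : G y = (fun v : ({ z // z ∈ ({y} : Finset Y) } → ℝ) =>
            v ⟨y, by simp⟩) ∘ (fun ω (i : { z // z ∈ ({y} : Finset Y) }) => G i.1 ω) := rfl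
        rw [h2]
        exact h1.comp (measurable_pi_apply _) measurable_id
      have hmap : P.map (fun ω => (G y ω, rest ω)) = (P.map (G y)).prod (P.map rest) :=
        (indepFun_iff_map_prod_eq_prod_map_map (hmeas y).aemeasurable
          hrestm.aemeasurable).mp hIndep
      -- event as preimage
      have hev : {ω | (fun z => G z ω) ∈ capEv u (m+1) S τ t}
          = (fun ω => (G y ω, rest ω)) ⁻¹' C := by
        ext ω
        simp only [Set.mem_setOf_eq, Set.mem_preimage, hC]
        have : ext (G y ω, rest ω) = fun z => G z ω := by
          funext z
          by_cases h : z ∈ T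
          · simp [hext, dif_pos h, hrest]
          · have hzy : z = y := by
              by_contra hne
              exact h (hzT z hne)
            simp [hext, dif_neg h, hzy, hyT]
        rw [this]
      haveI : IsProbabilityMeasure (P.map rest) := Measure.isProbabilityMeasure_map hrestm.aemeasurable
      rw [hev, ← Measure.map_apply hpairm hCm, hmap, Measure.prod_apply hCm, hdist y]
      -- compute slices
      set c : ℝ := plProd w m S' τ' with hc
      have hcnn : 0 ≤ c := plProd_nonneg (fun z => (exp_pos _).le) m S' τ'
      have hslice : ∀ a : ℝ, (P.map rest) (Prod.mk a ⁻¹' C)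
          = Set.indicator (Iio (t - u y))
              (fun a => ENNReal.ofReal (c * ∏ z ∈ S', exp (-(w z) * exp (-(u y + a) / b)))) a := by
        intro a
        have hsm : MeasurableSet (Prod.mk a ⁻¹' C) := (measurable_prodMk_left) hCm
        have hmem : ∀ g, (a, g) ∈ C ↔ (u y + a < t ∧
            ext (a, g) ∈ capEv u m S' τ' (u y + a)) := by
          intro g
          simp only [hC, Set.mem_preimage, capEv, Set.mem_setOf_eq]
          have h1 : ext (a, g) y = a := by simp [hext, dif_neg hyT]
          rw [show ext (a, g) (τ 0) = a from h1]
        by_cases hat : u y + a < t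
        · rw [Set.indicator_of_mem (by simp [mem_Iio]; linarith)]
          rw [Measure.map_apply hrestm hsm]
          have hev2 : rest ⁻¹' (Prod.mk a ⁻¹' C)
              = {ω | (fun z => G z ω) ∈ capEv u m S' τ' (u y + a)} := by
            ext ω
            simp only [Set.mem_preimage, Set.mem_setOf_eq]
            rw [hmem]
            simp only [hat, true_and]
            apply capEv_congr m S' τ' hinj' hr'
            intro z hz
            have hzy : z ≠ y := (Finset.mem_erase.mp hz).1
            simp [hext, dif_pos (hzT z hzy), hrest]
          rw [hev2, ih S' τ' hinj' hr' (u y + a)]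
        · rw [Set.indicator_of_notMem (by simp [mem_Iio]; linarith)]
          have : Prod.mk a ⁻¹' C = ∅ := by
            ext g
            simp only [Set.mem_preimage, Set.mem_empty_iff_false, iff_false]
            intro hg
            exact hat ((hmem g).mp hg).1
          rw [this]
          simp
      simp only [hslice]
      rw [lintegral_indicator measurableSet_Iio]
      -- rewrite integrand into standard form
      set Cc : ℝ := (∑ z ∈ S', w z) * exp (-(u y) / b) with hCc
      have hCcnn : 0 ≤ Cc :=
        mul_nonneg (Finset.sum_nonneg fun z _ => (exp_pos _).le) (exp_pos _).le
      have hintg : ∀ a : ℝ, (c * ∏ z ∈ S', exp (-(w z) * exp (-(u y + a) / b)))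
          = c * exp (-Cc * exp (-a / b)) := by
        intro a
        congr 1
        rw [← Real.exp_sum]
        congr 1
        have h1 : ∀ z, -(w z) * exp (-(u y + a) / b)
            = w z * -(exp (-(u y) / b) * exp (-a / b)) := by
          intro z
          have harg : -(u y + a) / b = -(u y) / b + -a / b := by ring
          rw [harg, Real.exp_add]; ring
        rw [Finset.sum_congr rfl (fun z _ => h1 z), ← Finset.sum_mul, hCc]
        ring
      simp only [hintg]
      rw [gumbel_setLIntegral hb hcnn hCcnn (t - u y)]
      -- final algebra
      have hWpos : 0 < ∑ z ∈ S, w z := Finset.sum_pos (fun z _ => exp_pos _) ⟨y, hr 0⟩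
      have hwy : (0:ℝ) < w y := exp_pos _
      have hsum : w y + ∑ z ∈ S', w z = ∑ z ∈ S, w z := Finset.add_sum_erase S w (hr 0)
      have hwyinv : exp (-(u y) / b) = (w y)⁻¹ := by
        rw [hw]; simp only [neg_div, Real.exp_neg]
      have h1C : 1 + Cc = (∑ z ∈ S, w z) / w y := by
        rw [hCc, hwyinv, ← hsum]
        field_simp
      have hExp : exp (-(t - u y) / b) = w y * exp (-t / b) := by
        rw [hw]; simp only
        rw [← Real.exp_add]
        congr 1
        ring
      have hprodS : ∏ z ∈ S, exp (-(exp (u z / b)) * exp (-t / b))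
          = exp (-(∑ z ∈ S, w z) * exp (-t / b)) := by
        rw [← Real.exp_sum]
        congr 1
        rw [← Finset.sum_mul, ← Finset.sum_neg_distrib, hw]
      congr 1
      have hpl : plProd (fun z => exp (u z / b)) (m+1) S τ = (w y / ∑ z ∈ S, w z) * c := by
        rw [hc, hτ', hS', hy, hw]
        rfl
      rw [h1C, hExp, hprodS, hpl]
      have harg2 : -((∑ z ∈ S, w z) / w y) * (w y * exp (-t / b))
          = (-∑ z ∈ S, w z) * exp (-t / b) := by
        field_simp
      rw [harg2, one_div_div]
      ring

end key

/-- Gumbel top-`k`: selecting the `k` candidates with the largest noisy utilities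
(i.i.d. `Gumbel(2Δ/ε)` noise added to each utility) is equal in distribution to
applying the exponential mechanism (parameter `ε`) sequentially `k` times without
replacement: the probability that the ordered top-`k` list equals a given injective
sequence `σ` is the Plackett–Luce product
`∏ i, w(σ i) / ∑_{y not yet chosen} w y` with `w y = exp(ε q(X,y)/(2Δ))`.
Hence the top-`k` selection inherits the privacy of the `k`-fold sequential
exponential mechanism, i.e. it is `kε`-differentially private. -/
theorem gumbel_topk_is_sequential_exponential {D Y : Type*} [Fintype Y] [Nonempty Y] [DecidableEq Y]
    {Ω : Type*} [MeasurableSpace Ω] (P : Measure Ω) [IsProbabilityMeasure P]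
    (N : D → D → Prop) (ε Δ : ℝ) (hε : 0 < ε) (hΔ : 0 < Δ)
    (q : D → Y → ℝ) (hsens : ∀ A B y, N A B → |q A y - q B y| ≤ Δ)
    (G : Y → Ω → ℝ) (hmeas : ∀ y, Measurable (G y))
    (hindep : iIndepFun G P)
    (hdist : ∀ y, Measure.map (G y) P = gumbelMeasure (2 * Δ / ε))
    (k : ℕ) (σ : Fin k → Y) (hσ : Function.Injective σ) :
    (∀ X : D,
        P (topKEvent (q X) G σ)
          = ENNReal.ofReal (∏ i : Fin k,
              exp (ε * q X (σ i) / (2 * Δ)) /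
                ∑ y ∈ Finset.univ.filter (fun y => ∀ j : Fin k, j < i → σ j ≠ y),
                  exp (ε * q X y / (2 * Δ)))) ∧
    (∀ A B, N A B →
        P (topKEvent (q A) G σ)
          ≤ ENNReal.ofReal (exp (k * ε)) * P (topKEvent (q B) G σ)) := by
  set b : ℝ := 2 * Δ / ε with hbdef
  have hb : 0 < b := by positivity
  have hr : ∀ i : Fin k, σ i ∈ (Finset.univ : Finset Y) := fun i => Finset.mem_univ _
  -- main formula
  have main : ∀ X : D,
      P (topKEvent (q X) G σ)
        = ENNReal.ofReal (∏ i : Fin k,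
            exp (ε * q X (σ i) / (2 * Δ)) /
              ∑ y ∈ Finset.univ.filter (fun y => ∀ j : Fin k, j < i → σ j ≠ y),
                exp (ε * q X y / (2 * Δ))) := by
    intro X
    have hfun : (fun z : Y => exp (q X z / b)) = fun z => exp (ε * q X z / (2 * Δ)) := by
      funext z
      congr 1
      rw [hbdef]
      field_simp
    have hev : topKEvent (q X) G σ
        = ⋃ n : ℕ, {ω | (fun z => G z ω) ∈ capEv (q X) k Finset.univ σ (n : ℝ)} := by
      ext ω
      simp only [topKEvent, Set.mem_setOf_eq, Set.mem_iUnion]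
      constructor
      · rintro ⟨h1, h2⟩
        obtain ⟨M, hM⟩ := Finset.exists_le (Finset.univ.image (fun z => q X z + G z ω))
        obtain ⟨n, hn⟩ := exists_nat_gt M
        have hval : ∀ z : Y, q X z + G z ω < n := by
          intro z
          exact lt_of_le_of_lt (hM _ (Finset.mem_image_of_mem _ (Finset.mem_univ z))) hn
        refine ⟨n, (mem_capEv_iff k Finset.univ σ hσ hr (n : ℝ) _).mpr ?_⟩
        exact ⟨fun i => hval _, h1, fun z _ hz => ⟨fun i => h2 i z hz, hval z⟩⟩
      · rintro ⟨n, hn⟩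
        obtain ⟨_, h2, h3⟩ := (mem_capEv_iff k Finset.univ σ hσ hr (n : ℝ) _).mp hn
        exact ⟨h2, fun i z hz => (h3 z (Finset.mem_univ z) hz).1 i⟩
    have hmono : Monotone fun n : ℕ =>
        {ω | (fun z => G z ω) ∈ capEv (q X) k Finset.univ σ (n : ℝ)} := by
      intro n n' hnn ω hω
      exact capEv_mono k Finset.univ σ (by exact_mod_cast hnn) hω
    have hlim1 := tendsto_measure_iUnion_atTop (μ := P) hmono
    have hval : ∀ n : ℕ, P {ω | (fun z => G z ω) ∈ capEv (q X) k Finset.univ σ (n : ℝ)}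
        = ENNReal.ofReal (plProd (fun z => exp (q X z / b)) k Finset.univ σ *
            ∏ z ∈ Finset.univ, exp (-(exp (q X z / b)) * exp (-(n : ℝ) / b))) :=
      fun n => key_measure P hb G hmeas hindep (by simpa [hbdef] using hdist) (q X)
        k Finset.univ σ hσ hr _
    have hlim2 : Tendsto
        (fun n : ℕ => P {ω | (fun z => G z ω) ∈ capEv (q X) k Finset.univ σ (n : ℝ)})
        atTop (𝓝 (ENNReal.ofReal (plProd (fun z => exp (q X z / b)) k Finset.univ σ))) := by
      simp only [hval]
      have hfac : ∀ z : Y, Tendsto (fun n : ℕ => exp (-(exp (q X z / b)) * exp (-(n : ℝ) / b)))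
          atTop (𝓝 1) := by
        intro z
        have h1 : Tendsto (fun n : ℕ => -(n : ℝ) / b) atTop atBot :=
          Tendsto.atBot_div_const hb (tendsto_neg_atBot_iff.mpr tendsto_natCast_atTop_atTop)
        have h2 : Tendsto (fun n : ℕ => -(exp (q X z / b)) * exp (-(n : ℝ) / b)) atTop (𝓝 0) := by
          have := (Real.tendsto_exp_atBot.comp h1).const_mul (-(exp (q X z / b)))
          simpa using this
        have := (Real.continuous_exp.tendsto 0).comp h2
        simpa [Real.exp_zero, Function.comp_def] using this
      have hprod : Tendsto
          (fun n : ℕ => ∏ z ∈ Finset.univ, exp (-(exp (q X z / b)) * exp (-(n : ℝ) / b)))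
          atTop (𝓝 1) := by
        have := tendsto_finset_prod (Finset.univ : Finset Y)
          (f := fun z (n : ℕ) => exp (-(exp (q X z / b)) * exp (-(n : ℝ) / b)))
          (a := fun _ => (1:ℝ)) (fun z _ => hfac z)
        simpa using this
      have hreal : Tendsto (fun n : ℕ => plProd (fun z => exp (q X z / b)) k Finset.univ σ *
          ∏ z ∈ Finset.univ, exp (-(exp (q X z / b)) * exp (-(n : ℝ) / b)))
          atTop (𝓝 (plProd (fun z => exp (q X z / b)) k Finset.univ σ)) := by
        have := hprod.const_mul (plProd (fun z => exp (q X z / b)) k Finset.univ σ)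
        simpa using this
      exact (ENNReal.continuous_ofReal.tendsto _).comp hreal
    have hPeq : P (topKEvent (q X) G σ)
        = ENNReal.ofReal (plProd (fun z => exp (q X z / b)) k Finset.univ σ) := by
      rw [hev]
      exact tendsto_nhds_unique hlim1 hlim2
    rw [hPeq, hfun, plProd_eq k Finset.univ σ hσ hr]
  refine ⟨main, ?_⟩
  -- privacy bound
  intro A B hN
  rw [main A, main B]
  set wA : Y → ℝ := fun z => exp (ε * q A z / (2 * Δ)) with hwA
  set wB : Y → ℝ := fun z => exp (ε * q B z / (2 * Δ)) with hwB
  set F : Fin k → Finset Y := fun i => Finset.univ.filter (fun y => ∀ j : Fin k, j < i → σ j ≠ y)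
    with hF
  have hFmem : ∀ i, σ i ∈ F i := by
    intro i
    simp only [hF, Finset.mem_filter, Finset.mem_univ, true_and]
    intro j hj h
    exact absurd (hσ h) (ne_of_lt hj)
  have hSApos : ∀ i, 0 < ∑ z ∈ F i, wA z :=
    fun i => Finset.sum_pos' (fun z _ => (exp_pos _).le) ⟨σ i, hFmem i, exp_pos _⟩
  have hSBpos : ∀ i, 0 < ∑ z ∈ F i, wB z :=
    fun i => Finset.sum_pos' (fun z _ => (exp_pos _).le) ⟨σ i, hFmem i, exp_pos _⟩
  have hhalf : ∀ z : Y, wA z ≤ exp (ε / 2) * wB z ∧ wB z ≤ exp (ε / 2) * wA z := by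
    intro z
    have habs := hsens A B z hN
    have h1 : q A z - q B z ≤ Δ := (abs_le.mp habs).2
    have h2 : q B z - q A z ≤ Δ := by
      have := (abs_le.mp habs).1; linarith
    have hkey : ∀ r s : ℝ, r - s ≤ Δ →
        exp (ε * r / (2 * Δ)) ≤ exp (ε / 2) * exp (ε * s / (2 * Δ)) := by
      intro r s hrs
      rw [← Real.exp_add]
      apply Real.exp_le_exp.mpr
      have h3 : ε * r ≤ ε * s + ε * Δ := by nlinarith
      calc ε * r / (2 * Δ) ≤ (ε * s + ε * Δ) / (2 * Δ) := by
            apply div_le_div_of_nonneg_right h3 (by positivity) |>.trans_eq rfl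
        _ = ε / 2 + ε * s / (2 * Δ) := by field_simp; ring
    exact ⟨hkey _ _ h1, hkey _ _ h2⟩
  have hterm : ∀ i : Fin k, wA (σ i) / ∑ z ∈ F i, wA z
      ≤ exp ε * (wB (σ i) / ∑ z ∈ F i, wB z) := by
    intro i
    rw [div_le_iff₀ (hSApos i), mul_comm (exp ε), mul_assoc, div_mul_eq_mul_div,
      le_div_iff₀ (hSBpos i)]
    have hA : wA (σ i) ≤ exp (ε / 2) * wB (σ i) := (hhalf _).1
    have hSB : ∑ z ∈ F i, wB z ≤ exp (ε / 2) * ∑ z ∈ F i, wA z := by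
      rw [Finset.mul_sum]
      exact Finset.sum_le_sum fun z _ => (hhalf z).2
    calc wA (σ i) * ∑ z ∈ F i, wB z
        ≤ (exp (ε / 2) * wB (σ i)) * (exp (ε / 2) * ∑ z ∈ F i, wA z) := by
          apply mul_le_mul hA hSB (Finset.sum_nonneg fun z _ => (exp_pos _).le) (by positivity)
      _ = (exp (ε / 2) * exp (ε / 2)) * (wB (σ i) * ∑ z ∈ F i, wA z) := by ring
      _ = wB (σ i) * (exp ε * ∑ z ∈ F i, wA z) := by
          rw [← Real.exp_add]
          norm_num
          ring
  have hprodle : ∏ i : Fin k, wA (σ i) / ∑ z ∈ F i, wA z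
      ≤ exp (k * ε) * ∏ i : Fin k, wB (σ i) / ∑ z ∈ F i, wB z := by
    calc ∏ i : Fin k, wA (σ i) / ∑ z ∈ F i, wA z
        ≤ ∏ i : Fin k, exp ε * (wB (σ i) / ∑ z ∈ F i, wB z) := by
          apply Finset.prod_le_prod
          · intro i _; positivity
          · intro i _; exact hterm i
      _ = exp (k * ε) * ∏ i : Fin k, wB (σ i) / ∑ z ∈ F i, wB z := by
          rw [Finset.prod_mul_distrib, Finset.prod_const]
          congr 1
          simp [Real.exp_nat_mul, Finset.card_univ]
  calc ENNReal.ofReal (∏ i : Fin k, wA (σ i) / ∑ z ∈ F i, wA z)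
      ≤ ENNReal.ofReal (exp (k * ε) * ∏ i : Fin k, wB (σ i) / ∑ z ∈ F i, wB z) :=
        ENNReal.ofReal_le_ofReal hprodle
    _ = ENNReal.ofReal (exp (k * ε)) * ENNReal.ofReal (∏ i : Fin k, wB (σ i) / ∑ z ∈ F i, wB z) :=
        ENNReal.ofReal_mul (exp_pos _).le
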